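/- Fix n ≥ 2 and (x,y) ∈ ℂⁿ × ℂ^{n−1}. If (x,y) ∈ G_{1,n}, then the rational function Ψ_n(z; x, y) = P_n(z; x)/Q_n(z; y) (after cancelling common linear factors) has no poles in the closed unit disc and satisfies |Ψ_n(z; x, y)| < 1 for all z in the closed unit disc. -/

import Mathlib

open BigOperators Polynomial

/-- `P_n(·; x)` as a polynomial: `Σ_{j=0}^{n−1} (−1)^j x_{j+1} X^j`. -/
noncomputable def Ppoly {N : ℕ} (x : Fin N → ℂ) : Polynomial ℂ :=
  ∑ j : Fin N, Polynomial.C ((-1 : ℂ) ^ (j : ℕ) * x j) * Polynomial.X ^ (j : ℕ)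

/-- `Q_n(·; y)` as a polynomial: `1 + Σ_{j=1}^{n−1} (−1)^j y_j X^j`. -/
noncomputable def Qpoly {M : ℕ} (y : Fin M → ℂ) : Polynomial ℂ :=
  1 + ∑ j : Fin M, Polynomial.C ((-1 : ℂ) ^ ((j : ℕ) + 1) * y j) * Polynomial.X ^ ((j : ℕ) + 1)

/-- If `(x,y) ∈ G_{1,n}`, then the rational function `Ψ_n = P_n/Q_n` (after cancelling
the common factors, i.e. dividing both by their gcd) has no poles in the closed unit
disc and has modulus `< 1` there. -/
theorem stmt12 (m : ℕ) (x : Fin (m+2) → ℂ) (y : Fin (m+1) → ℂ)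
    (h : ∀ z w : ℂ, ‖z‖ ≤ 1 → ‖w‖ ≤ 1 →
      (Qpoly y - Polynomial.C w * Ppoly x).eval z ≠ 0) :
    ∀ z : ℂ, ‖z‖ ≤ 1 →
      (Qpoly y / EuclideanDomain.gcd (Ppoly x) (Qpoly y)).eval z ≠ 0 ∧
      ‖(Ppoly x / EuclideanDomain.gcd (Ppoly x) (Qpoly y)).eval z /
        (Qpoly y / EuclideanDomain.gcd (Ppoly x) (Qpoly y)).eval z‖ < 1 := by
  intro z hz
  have hQz : (Qpoly y).eval z ≠ 0 := by
    have := h z 0 hz (by simp)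
    simpa using this
  have hPQ : ‖(Ppoly x).eval z‖ < ‖(Qpoly y).eval z‖ := by
    by_contra hle
    push_neg at hle
    have hPz : (Ppoly x).eval z ≠ 0 := by
      intro h0
      rw [h0, norm_zero] at hle
      exact hQz (by simpa using le_antisymm hle (norm_nonneg _))
    have hw : ‖(Qpoly y).eval z / (Ppoly x).eval z‖ ≤ 1 := by
      rw [norm_div]
      exact div_le_one_of_le₀ hle (norm_nonneg _)
    apply h z _ hz hw
    simp only [Polynomial.eval_sub, Polynomial.eval_mul, Polynomial.eval_C]
    field_simp
    ring
  set g := EuclideanDomain.gcd (Ppoly x) (Qpoly y) with hg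
  have hQ0 : Qpoly y ≠ 0 := fun h0 => hQz (by rw [h0]; simp)
  have hgne : g ≠ 0 := fun h0 =>
    hQ0 (EuclideanDomain.gcd_eq_zero_iff.mp h0).2
  have hQeq : g * (Qpoly y / g) = Qpoly y :=
    EuclideanDomain.mul_div_cancel' hgne (EuclideanDomain.gcd_dvd_right _ _)
  have hPeq : g * (Ppoly x / g) = Ppoly x :=
    EuclideanDomain.mul_div_cancel' hgne (EuclideanDomain.gcd_dvd_left _ _)
  have hQz' : g.eval z * (Qpoly y / g).eval z = (Qpoly y).eval z := by
    rw [← Polynomial.eval_mul, hQeq]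
  have hPz' : g.eval z * (Ppoly x / g).eval z = (Ppoly x).eval z := by
    rw [← Polynomial.eval_mul, hPeq]
  have hgz : g.eval z ≠ 0 := by
    intro h0; rw [h0, zero_mul] at hQz'; exact hQz hQz'.symm
  have hQ'z : (Qpoly y / g).eval z ≠ 0 := by
    intro h0; rw [h0, mul_zero] at hQz'; exact hQz hQz'.symm
  refine ⟨hQ'z, ?_⟩
  have hkey : ‖(Ppoly x / g).eval z‖ < ‖(Qpoly y / g).eval z‖ := by
    have habsg : 0 < ‖g.eval z‖ := by
      exact norm_pos_iff.mpr hgz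
    have := hPQ
    rw [← hPz', ← hQz', norm_mul, norm_mul] at this
    exact lt_of_mul_lt_mul_left this (le_of_lt habsg)
  rw [norm_div]
  rw [div_lt_one (norm_pos_iff.mpr hQ'z)]
  exact hkey
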